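/- Let G be a connected k-chordal graph of maximum degree Δ, let v₀ ∈ V(G), let L_j = {v : d(v₀,v) = j}, and let G₁ = G[L_{≤ i−1}] for some i ≥ 2. Then for every u ∈ L_i and every pair v, w ∈ N(u) ∩ L_{i−1}, we have d_{G₁}(v, w) ≤ Δ·k. -/

import Mathlib

open SimpleGraph Walk

def IsKChordal {V : Type*} (G : SimpleGraph V) (k : ℕ) : Prop :=
  ∀ (a : V) (c : G.Walk a a), c.IsCycle →
    (∀ u ∈ c.support, ∀ v ∈ c.support, G.Adj u v → s(u, v) ∈ c.edges) →
    c.length ≤ k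

lemma find_split {V : Type*} {G : SimpleGraph V} {S : Set V} {u : V} :
    ∀ {a b : ↥S} (q : (G.induce S).Walk a b), G.Adj u ↑b →
    ∃ (x : ↥S) (pre : (G.induce S).Walk a x) (suf : (G.induce S).Walk x b),
      pre.append suf = q ∧ G.Adj u ↑x ∧
      ∀ y ∈ pre.support, G.Adj u ↑y → y = x
  | a, _, Walk.nil, hb => ⟨a, Walk.nil, Walk.nil, by simp, hb, by simp⟩
  | a, b, Walk.cons h r, hb => by
    by_cases ha : G.Adj u ↑a
    · exact ⟨a, Walk.nil, Walk.cons h r, by simp, ha, by simp⟩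
    · obtain ⟨x, pre, suf, hsplit, hx, hmin⟩ := find_split r hb
      refine ⟨x, Walk.cons h pre, suf, by rw [Walk.cons_append, hsplit], hx, ?_⟩
      intro y hy hadj
      rw [Walk.support_cons, List.mem_cons] at hy
      rcases hy with hy | hy
      · subst hy; exact absurd hadj ha
      · exact hmin y hy hadj

lemma junction_eq {W : Type*} {H : SimpleGraph W} {a b c : W} {p₁ : H.Walk a b}
    {p₂ : H.Walk b c} (hp : (p₁.append p₂).IsPath) {y : W}
    (h1 : y ∈ p₁.support) (h2 : y ∈ p₂.support) : y = b := by
  rw [Walk.isPath_def, Walk.support_append] at hp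
  have hd := List.disjoint_of_nodup_append hp
  rw [p₂.support_eq_cons] at h2
  rcases List.mem_cons.mp h2 with h2 | h2
  · exact h2
  · exact absurd (hd h1 h2) not_false

lemma core_bound {V : Type*} [Finite V] {G : SimpleGraph V} {k : ℕ} (hch : IsKChordal G k)
    {S : Set V} {u : V} (hu : u ∉ S) :
    ∀ (n : ℕ) {a b : ↥S} (p : (G.induce S).Walk a b), p.length ≤ n → p.IsPath →
    (∀ y ∈ p.support, ∀ z ∈ p.support, (G.induce S).Adj y z → s(y, z) ∈ p.edges) →
    G.Adj u ↑a → G.Adj u ↑b →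
    p.length ≤ ({y : ↥S | y ∈ p.support ∧ G.Adj u ↑y}.ncard - 1) * k := by
  intro n
  induction n with
  | zero =>
    intro a b p hlen _ _ _ _
    omega
  | succ n ih =>
    intro a b p hlen hp hind ha hb
    cases p with
    | nil => simp
    | @cons _ a₂ _ h q =>
      rw [Walk.cons_isPath_iff] at hp
      obtain ⟨hqp, haq⟩ := hp
      obtain ⟨x, pre, suf, hsplit, hxadj, hmin⟩ := find_split q hb
      have hxq : x ∈ q.support := by
        rw [← hsplit, Walk.mem_support_append_iff]
        exact Or.inr suf.start_mem_support
      have hax : a ≠ x := fun hax => haq (hax ▸ hxq)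
      have hqp' : (pre.append suf).IsPath := by rw [hsplit]; exact hqp
      have hprepath : pre.IsPath := hqp'.of_append_left
      have hsufpath : suf.IsPath := hqp'.of_append_right
      have hapre : a ∉ pre.support := fun hmem =>
        haq (by rw [← hsplit, Walk.mem_support_append_iff]; exact Or.inl hmem)
      set prefix' : (G.induce S).Walk a x := Walk.cons h pre with hprefix
      have hpsplit : Walk.cons h q = prefix'.append suf := by
        rw [hprefix, Walk.cons_append, hsplit]
      have hppath : (prefix'.append suf).IsPath := by
        rw [← hpsplit, Walk.cons_isPath_iff]; exact ⟨hqp, haq⟩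
      have hprefixpath : prefix'.IsPath := by
        rw [hprefix, Walk.cons_isPath_iff]; exact ⟨hprepath, hapre⟩
      -- map the prefix into G
      set f : G.induce S →g G := (SimpleGraph.Embedding.induce S).toHom with hf
      have hfinj : Function.Injective f := Subtype.val_injective
      set P : G.Walk (↑a) (↑x) := prefix'.map f with hP
      have hPpath : P.IsPath := Walk.map_isPath_of_injective hfinj hprefixpath
      have huP : u ∉ P.support := by
        intro hmem
        replace hmem : u ∈ (prefix'.map f).support := hmem
        rw [Walk.support_map] at hmem
        obtain ⟨y', hy', hyv⟩ := List.mem_map.mp hmem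
        exact hu (hyv ▸ y'.2)
      have hxu : G.Adj (↑x) u := hxadj.symm
      have hconc : (P.concat hxu).IsPath := by
        rw [← Walk.isPath_reverse_iff, Walk.reverse_concat, Walk.cons_isPath_iff,
            Walk.isPath_reverse_iff]
        exact ⟨hPpath, by simpa [Walk.support_reverse] using huP⟩
      have hedge : s(u, (↑a : V)) ∉ (P.concat hxu).edges := by
        rw [Walk.edges_concat, List.concat_eq_append]
        intro hmem
        rcases List.mem_append.mp hmem with hmem | hmem
        · exact huP (Walk.fst_mem_support_of_mem_edges P hmem)
        · rw [List.mem_singleton] at hmem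
          rcases Sym2.eq_iff.mp hmem with ⟨h1, h2⟩ | ⟨h1, h2⟩
          · exact hu (h1 ▸ x.2)
          · exact hax (Subtype.val_injective h2)
      have hcyc : (Walk.cons ha (P.concat hxu)).IsCycle :=
        (Walk.cons_isCycle_iff _ _).mpr ⟨hconc, hedge⟩
      have hsupp_c : ∀ y ∈ (Walk.cons ha (P.concat hxu)).support,
          y = u ∨ ∃ y' ∈ prefix'.support, (↑y' : V) = y := by
        intro y hy
        rw [Walk.support_cons, List.mem_cons] at hy
        rcases hy with rfl | hy
        · exact Or.inl rfl
        · rw [Walk.support_concat, List.mem_append] at hy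
          rcases hy with hy | hy
          · right
            replace hy : y ∈ (prefix'.map f).support := hy
            rw [Walk.support_map] at hy
            obtain ⟨y', hy', rfl⟩ := List.mem_map.mp hy
            exact ⟨y', hy', rfl⟩
          · exact Or.inl (List.mem_singleton.mp hy)
      have hces : (Walk.cons ha (P.concat hxu)).edges
          = s(u, (↑a : V)) :: (P.edges ++ [s((↑x : V), u)]) := by
        rw [Walk.edges_cons, Walk.edges_concat, List.concat_eq_append]
      have hedecomp : (Walk.cons h q).edges = prefix'.edges ++ suf.edges := by
        rw [hpsplit, Walk.edges_append]
      have hcind : ∀ y ∈ (Walk.cons ha (P.concat hxu)).support,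
          ∀ z ∈ (Walk.cons ha (P.concat hxu)).support, G.Adj y z →
          s(y, z) ∈ (Walk.cons ha (P.concat hxu)).edges := by
        intro y hy z hz hyz
        rw [hces]
        rcases hsupp_c y hy with rfl | ⟨y', hy', rfl⟩ <;>
          rcases hsupp_c z hz with rfl | ⟨z', hz', rfl⟩
        · exact absurd hyz G.irrefl
        · -- y = u, z = ↑z'
          rw [hprefix, Walk.support_cons, List.mem_cons] at hz'
          rcases hz' with rfl | hz'
          · exact List.mem_cons_self
          · have hzx := hmin z' hz' hyz
            subst hzx
            simp [Sym2.eq_swap]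
        · -- z = u, y = ↑y'
          rw [hprefix, Walk.support_cons, List.mem_cons] at hy'
          rcases hy' with rfl | hy'
          · simp [Sym2.eq_swap]
          · have hyx := hmin y' hy' hyz.symm
            subst hyx
            simp [Sym2.eq_swap]
        · -- both from prefix'
          have hadj' : (G.induce S).Adj y' z' := hyz
          have hy'p : y' ∈ (Walk.cons h q).support := by
            rw [hpsplit, Walk.mem_support_append_iff]; exact Or.inl hy'
          have hz'p : z' ∈ (Walk.cons h q).support := by
            rw [hpsplit, Walk.mem_support_append_iff]; exact Or.inl hz'
          have hedge' := hind y' hy'p z' hz'p hadj'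
          rw [hedecomp] at hedge'
          rcases List.mem_append.mp hedge' with hmem | hmem
          · refine List.mem_cons_of_mem _ (List.mem_append_left _ ?_)
            show s(↑y', ↑z') ∈ (prefix'.map f).edges
            rw [Walk.edges_map]
            exact List.mem_map.mpr ⟨s(y', z'), hmem, Sym2.map_pair_eq f y' z'⟩
          · exfalso
            have hys : y' ∈ suf.support := Walk.fst_mem_support_of_mem_edges suf hmem
            have hzs : z' ∈ suf.support := Walk.snd_mem_support_of_mem_edges suf hmem
            have h1 : y' = x := junction_eq hppath hy' hys
            have h2 : z' = x := junction_eq hppath hz' hzs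
            exact hadj'.ne (h1.trans h2.symm)
      have hck := hch u (Walk.cons ha (P.concat hxu)) hcyc hcind
      have hclen : (Walk.cons ha (P.concat hxu)).length = pre.length + 3 := by
        rw [Walk.length_cons, Walk.length_concat]
        show (prefix'.map f).length + 1 + 1 = _
        rw [Walk.length_map, hprefix, Walk.length_cons]
      rw [hclen] at hck
      -- suffix is induced
      have hsufind : ∀ y ∈ suf.support, ∀ z ∈ suf.support, (G.induce S).Adj y z →
          s(y, z) ∈ suf.edges := by
        intro y hy z hz hyz
        have hyp : y ∈ (Walk.cons h q).support := by
          rw [hpsplit, Walk.mem_support_append_iff]; exact Or.inr hy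
        have hzp : z ∈ (Walk.cons h q).support := by
          rw [hpsplit, Walk.mem_support_append_iff]; exact Or.inr hz
        have hedge' := hind y hyp z hzp hyz
        rw [hedecomp] at hedge'
        rcases List.mem_append.mp hedge' with hmem | hmem
        · exfalso
          have hys : y ∈ prefix'.support := Walk.fst_mem_support_of_mem_edges prefix' hmem
          have hzs : z ∈ prefix'.support := Walk.snd_mem_support_of_mem_edges prefix' hmem
          exact hyz.ne ((junction_eq hppath hys hy).trans (junction_eq hppath hzs hz).symm)
        · exact hmem
      have hlensplit : (Walk.cons h q).length = (pre.length + 1) + suf.length := by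
        rw [hpsplit, Walk.length_append, hprefix, Walk.length_cons]
      have hsuflen : suf.length ≤ n := by
        rw [hlensplit] at hlen; omega
      have hrec := ih suf hsuflen hsufpath hsufind hxadj hb
      -- counting
      set A := {y : ↥S | y ∈ (Walk.cons h q).support ∧ G.Adj u ↑y} with hA
      set B := {y : ↥S | y ∈ suf.support ∧ G.Adj u ↑y} with hB
      have haB : a ∉ B := by
        rintro ⟨hmem, -⟩
        exact haq (by rw [← hsplit, Walk.mem_support_append_iff]; exact Or.inr hmem)
      have hBA : insert a B ⊆ A := by
        rintro y hy
        rcases Set.mem_insert_iff.mp hy with rfl | ⟨hmem, hadj⟩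
        · exact ⟨Walk.start_mem_support _, ha⟩
        · exact ⟨by rw [hpsplit, Walk.mem_support_append_iff]; exact Or.inr hmem, hadj⟩
      have hxB : x ∈ B := ⟨suf.start_mem_support, hxadj⟩
      have hcard : B.ncard + 1 ≤ A.ncard := by
        have h1 : (insert a B).ncard = B.ncard + 1 := Set.ncard_insert_of_notMem haB (Set.toFinite _)
        have h2 : (insert a B).ncard ≤ A.ncard := Set.ncard_le_ncard hBA (Set.toFinite _)
        omega
      have hBpos : 1 ≤ B.ncard := (Set.ncard_pos (Set.toFinite _)).mpr ⟨x, hxB⟩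
      -- final arithmetic
      have hk1 : pre.length + 1 ≤ k := by omega
      calc (Walk.cons h q).length = (pre.length + 1) + suf.length := hlensplit
        _ ≤ k + (B.ncard - 1) * k := Nat.add_le_add hk1 hrec
        _ = ((B.ncard - 1) + 1) * k := by ring
        _ = B.ncard * k := by rw [Nat.sub_add_cancel hBpos]
        _ ≤ (A.ncard - 1) * k := Nat.mul_le_mul_right _ (by omega)


-- geodesic paths are induced
lemma geodesic_induced {W : Type*} {H : SimpleGraph W} :
    ∀ {a b : W} (p : H.Walk a b), p.length = H.dist a b →
    ∀ y ∈ p.support, ∀ z ∈ p.support, H.Adj y z → s(y, z) ∈ p.edges := by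
  intro a b p
  induction p with
  | nil =>
    intro _ y hy z hz hyz
    simp only [Walk.support_nil, List.mem_singleton] at hy hz
    subst hy; subst hz
    exact absurd hyz (H.irrefl)
  | @cons a a₂ b h q ih =>
    intro hd y hy z hz hyz
    have hreach : H.Reachable a₂ b := ⟨q⟩
    obtain ⟨r, hr⟩ := hreach.exists_walk_length_eq_dist
    have hd1 : H.dist a b ≤ H.dist a₂ b + 1 := by
      have := H.dist_le (Walk.cons h r)
      simpa [hr] using this
    have hd2 : H.dist a₂ b ≤ q.length := H.dist_le q
    have hq : q.length = H.dist a₂ b := by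
      simp only [Walk.length_cons] at hd
      omega
    -- shortcut lemma
    have shortcut : ∀ z' ∈ q.support, H.Adj a z' → z' = a₂ := by
      classical
      intro z' hz' hadj
      by_contra hne
      have hsplit := q.take_spec hz'
      have hlen : (q.takeUntil z' hz').length + (q.dropUntil z' hz').length = q.length := by
        conv_rhs => rw [← hsplit]
        rw [Walk.length_append]
      have htpos : 0 < (q.takeUntil z' hz').length := by
        rcases Nat.eq_zero_or_pos (q.takeUntil z' hz').length with h0 | h0
        · exact absurd (Walk.eq_of_length_eq_zero h0).symm hne
        · exact h0
      have := H.dist_le (Walk.cons hadj (q.dropUntil z' hz'))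
      simp only [Walk.length_cons] at this
      simp only [Walk.length_cons] at hd
      omega
    simp only [Walk.support_cons, List.mem_cons] at hy hz
    rcases hy with hy | hy <;> rcases hz with hz | hz
    · subst hy; subst hz; exact absurd hyz H.irrefl
    · subst hy
      have := shortcut z hz hyz
      subst this
      simp [Walk.edges_cons]
    · subst hz
      have := shortcut y hy hyz.symm
      subst this
      rw [Sym2.eq_swap]
      simp [Walk.edges_cons]
    · have := ih hq y hy z hz hyz
      simp [Walk.edges_cons, this]


theorem stmt6 {V : Type*} [Fintype V] (G : SimpleGraph V) (hG : G.Connected)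
    (k Δ : ℕ) (hch : IsKChordal G k) (hΔ : ∀ x : V, (G.neighborSet x).ncard ≤ Δ)
    (v₀ : V) (i : ℕ) (hi : 2 ≤ i)
    (u v w : V) (hu : G.dist v₀ u = i)
    (huv : G.Adj u v) (huw : G.Adj u w)
    (hv : G.dist v₀ v = i - 1) (hw : G.dist v₀ w = i - 1) :
    (G.induce {x | G.dist v₀ x ≤ i - 1}).dist ⟨v, le_of_eq hv⟩ ⟨w, le_of_eq hw⟩ ≤ Δ * k := by
  classical
  set S : Set V := {x | G.dist v₀ x ≤ i - 1} with hS
  by_cases h0 : (G.induce S).dist ⟨v, le_of_eq hv⟩ ⟨w, le_of_eq hw⟩ = 0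
  · rw [h0]; exact Nat.zero_le _
  · obtain ⟨p, hplen⟩ := SimpleGraph.exists_walk_of_dist_ne_zero h0
    have hqpath := p.bypass_isPath
    have hqlen : p.bypass.length
        = (G.induce S).dist ⟨v, le_of_eq hv⟩ ⟨w, le_of_eq hw⟩ := by
      have h1 := SimpleGraph.dist_le p.bypass
      have h2 := p.length_bypass_le
      omega
    have hind := geodesic_induced p.bypass hqlen
    have hu' : u ∉ S := by
      intro hmem
      rw [hS, Set.mem_setOf_eq, hu] at hmem
      omega
    have hb := core_bound hch hu' p.bypass.length p.bypass le_rfl hqpath hind huv huw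
    have hcount : {y : ↥S | y ∈ p.bypass.support ∧ G.Adj u ↑y}.ncard ≤ Δ := by
      have himg : Subtype.val '' {y : ↥S | y ∈ p.bypass.support ∧ G.Adj u ↑y}
          ⊆ G.neighborSet u := by
        rintro _ ⟨y, ⟨_, hadj⟩, rfl⟩
        exact hadj
      calc {y : ↥S | y ∈ p.bypass.support ∧ G.Adj u ↑y}.ncard
          = (Subtype.val '' {y : ↥S | y ∈ p.bypass.support ∧ G.Adj u ↑y}).ncard :=
            (Set.ncard_image_of_injective _ Subtype.val_injective).symm
        _ ≤ (G.neighborSet u).ncard := Set.ncard_le_ncard himg (Set.toFinite _)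
        _ ≤ Δ := hΔ u
    calc (G.induce S).dist ⟨v, le_of_eq hv⟩ ⟨w, le_of_eq hw⟩
        = p.bypass.length := hqlen.symm
      _ ≤ ({y : ↥S | y ∈ p.bypass.support ∧ G.Adj u ↑y}.ncard - 1) * k := hb
      _ ≤ Δ * k := Nat.mul_le_mul_right _ (by omega)
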